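/- arXiv:2406.16673 — 3 statements merged into one kernel-verified Lean document; each statement's English description precedes it below -/
import Mathlib

section
/- Define T : ℕ → ℝ by T(1) = 4 and T(n) = 2^{n+1}(n·2^{n−1} + T(n−1)) for n ≥ 2. Then for all n ≥ 1, T(n) ≤ 4 · 2^{n + n(n+1)/2}. -/
theorem aux9 (T : ℕ → ℝ) (hT1 : T 1 = 4)
    (hTrec : ∀ n, 2 ≤ n → T n = 2 ^ (n + 1) * (n * 2 ^ (n - 1) + T (n - 1))) :
    ∀ n, 1 ≤ n → T n ≤ 4 * 2 ^ (n + n * (n + 1) / 2)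
      - (n + 2) * 2 ^ (n + 1 + n * (n - 1) / 2) := by
  intro n hn
  induction n, hn using Nat.le_induction with
  | base => norm_num [hT1]
  | succ n hn IH =>
    obtain ⟨m, rfl⟩ := Nat.exists_eq_add_of_le hn
    obtain ⟨k, hk⟩ : ∃ k, m * (m + 1) = 2 * k := (Nat.even_mul_succ_self m).exists_two_nsmul _
    -- exponent simplifications
    have E1 : (1+m+1) + (1+m+1)*((1+m+1)+1)/2 = 3*m+5+k := by
      rw [show (1+m+1)*((1+m+1)+1) = m*(m+1)+(4*m+6) by ring, hk]; omega
    have E2 : (1+m+1)+1 + (1+m+1)*((1+m+1)-1)/2 = 2*m+4+k := by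
      rw [show (1+m+1)*((1+m+1)-1) = m*(m+1)+(2*m+2) by
        simp [Nat.add_sub_cancel]; ring, hk]; omega
    have E3 : (1+m) + (1+m)*((1+m)+1)/2 = 2*m+2+k := by
      rw [show (1+m)*((1+m)+1) = m*(m+1)+(2*m+2) by ring, hk]; omega
    have E4 : (1+m)+1 + (1+m)*((1+m)-1)/2 = m+2+k := by
      rw [show (1+m)*((1+m)-1) = m*(m+1) by rw [show (1+m)-1 = m from by omega]; ring, hk]; omega
    rw [E3, E4] at IH
    rw [E1, E2, hTrec (1+m+1) (by omega)]
    have hsub : (1+m+1) - 1 = 1+m := by omega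
    rw [hsub]
    push_cast
    have hpos : (0:ℝ) < 2 ^ ((1+m+1)+1) := by positivity
    have hIH : ((1:ℝ)+m) * 2 ^ (1+m+1-1) + T (1+m) ≤
        (1+m) * 2 ^ (1+m+1-1) + (4 * 2 ^ (2*m+2+k) - ((1+m)+2) * 2 ^ (m+2+k)) := by
      push_cast at IH; linarith
    have step1 : (2:ℝ) ^ ((1+m+1)+1) * (((1:ℝ)+m+1) * 2 ^ (1+m+1-1) + T (1+m)) ≤
        2 ^ ((1+m+1)+1) * ((1+m+1) * 2 ^ (1+m+1-1) +
          (4 * 2 ^ (2*m+2+k) - ((1+m)+2) * 2 ^ (m+2+k))) := by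
      apply mul_le_mul_of_nonneg_left _ (le_of_lt hpos)
      push_cast at IH; linarith
    refine le_trans step1 ?_
    have h1 : (1:ℝ) ≤ 2 ^ k := one_le_pow₀ (by norm_num)
    have h2 : (0:ℝ) < 2 ^ m := by positivity
    simp only [show (1+m+1)+1 = m+3 from by omega, show 1+m+1-1 = m+1 from by omega]
    ring_nf
    have h3 : (0:ℝ) < 2 ^ (m*2) := by positivity
    have h4 : (2:ℝ) ^ (m*2) ≤ 2 ^ (m*2) * 2 ^ k := by nlinarith
    have h5 : (m:ℝ) * 2 ^ (m*2) ≤ m * 2 ^ (m*2) * 2 ^ k := by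
      have : (0:ℝ) ≤ (m:ℝ) * 2 ^ (m*2) := by positivity
      nlinarith
    nlinarith [h4, h5]

theorem stmt_9 (T : ℕ → ℝ) (hT1 : T 1 = 4)
    (hTrec : ∀ n, 2 ≤ n → T n = 2 ^ (n + 1) * (n * 2 ^ (n - 1) + T (n - 1))) :
    ∀ n, 1 ≤ n → T n ≤ 4 * 2 ^ (n + n * (n + 1) / 2) := by
  intro n hn
  have h := aux9 T hT1 hTrec n hn
  have : (0:ℝ) ≤ (n + 2) * 2 ^ (n + 1 + n * (n - 1) / 2) := by positivity
  linarith
end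

section
/- Let P₀, …, P_{m−1} ∈ ℂ. Then max over choices c_x ∈ {0,1,2,3} of |∑_{x} i^{c_x} P_x| is at least (2√2/π) · ∑_x |P_x|. -/
open Real intervalIntegral

noncomputable def gmax (θ : ℝ) : ℝ := max |Real.cos θ| |Real.sin θ|

lemma gmax_cont : Continuous gmax :=
  (Real.continuous_cos.abs).max (Real.continuous_sin.abs)

lemma gmax_periodic : Function.Periodic gmax (Real.pi / 2) := by
  intro θ
  simp [gmax, Real.cos_add_pi_div_two, Real.sin_add_pi_div_two, abs_neg, max_comm]

lemma gmax_even (θ : ℝ) : gmax (-θ) = gmax θ := by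
  simp [gmax, Real.cos_neg, Real.sin_neg, abs_neg]

lemma gmax_periodic2pi : Function.Periodic gmax (2 * Real.pi) := by
  have h := gmax_periodic.nat_mul 4
  have : (4 : ℕ) * (Real.pi / 2) = 2 * Real.pi := by push_cast; ring
  rwa [this] at h

lemma integral_gmax_quarter : ∫ θ in (0:ℝ)..(Real.pi/2), gmax θ = Real.sqrt 2 := by
  have hpi : (0:ℝ) < Real.pi := Real.pi_pos
  have h1 : ∫ θ in (0:ℝ)..(Real.pi/4), gmax θ = ∫ θ in (0:ℝ)..(Real.pi/4), Real.cos θ := by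
    apply integral_congr
    intro θ hθ
    rw [Set.uIcc_of_le (by positivity)] at hθ
    obtain ⟨h0, h4⟩ := hθ
    have hcos : 0 ≤ Real.cos θ := Real.cos_nonneg_of_mem_Icc ⟨by linarith, by linarith⟩
    have hsin : 0 ≤ Real.sin θ := Real.sin_nonneg_of_nonneg_of_le_pi h0 (by linarith)
    have hle : Real.sin θ ≤ Real.cos θ := by
      rw [← Real.sin_pi_div_two_sub]
      exact Real.sin_le_sin_of_le_of_le_pi_div_two (by linarith) (by linarith) (by linarith)
    simp [gmax, abs_of_nonneg hcos, abs_of_nonneg hsin, max_eq_left hle]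
  have h2 : ∫ θ in (Real.pi/4)..(Real.pi/2), gmax θ
      = ∫ θ in (Real.pi/4)..(Real.pi/2), Real.sin θ := by
    apply integral_congr
    intro θ hθ
    rw [Set.uIcc_of_le (by linarith)] at hθ
    obtain ⟨h4, h2'⟩ := hθ
    have hcos : 0 ≤ Real.cos θ := Real.cos_nonneg_of_mem_Icc ⟨by linarith, by linarith⟩
    have hsin : 0 ≤ Real.sin θ := Real.sin_nonneg_of_nonneg_of_le_pi (by linarith) (by linarith)
    have hle : Real.cos θ ≤ Real.sin θ := by
      rw [← Real.sin_pi_div_two_sub]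
      exact Real.sin_le_sin_of_le_of_le_pi_div_two (by linarith) (by linarith) (by linarith)
    simp [gmax, abs_of_nonneg hcos, abs_of_nonneg hsin, max_eq_right hle]
  have hsplit : ∫ θ in (0:ℝ)..(Real.pi/2), gmax θ
      = (∫ θ in (0:ℝ)..(Real.pi/4), gmax θ) + ∫ θ in (Real.pi/4)..(Real.pi/2), gmax θ := by
    rw [integral_add_adjacent_intervals (gmax_cont.intervalIntegrable _ _)
      (gmax_cont.intervalIntegrable _ _)]
  rw [hsplit, h1, h2, integral_cos, integral_sin]
  rw [Real.sin_pi_div_four, Real.cos_pi_div_four, Real.sin_zero, Real.cos_pi_div_two]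
  rw [show Real.sqrt 2 = 2 * (Real.sqrt 2 / 2) by ring]
  ring

lemma integral_gmax_full : ∫ θ in (0:ℝ)..(2*Real.pi), gmax θ = 4 * Real.sqrt 2 := by
  have h := gmax_periodic.intervalIntegral_add_zsmul_eq 4 0
    (fun t₁ t₂ => gmax_cont.intervalIntegrable _ _)
  have h4 : (0:ℝ) + (4:ℤ) • (Real.pi / 2) = 2 * Real.pi := by
    rw [zsmul_eq_mul]; push_cast; ring
  rw [h4] at h
  rw [h, zero_add, integral_gmax_quarter, zsmul_eq_mul]
  push_cast; ring

lemma exists_ge_avg {f : ℝ → ℝ} (hf : Continuous f) {a b : ℝ} (hab : a < b) :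
    ∃ θ, (∫ t in a..b, f t) / (b - a) ≤ f θ := by
  obtain ⟨θ, hθmem, hmax⟩ := (isCompact_Icc (a := a) (b := b)).exists_isMaxOn
    (Set.nonempty_Icc.2 hab.le) hf.continuousOn
  refine ⟨θ, ?_⟩
  rw [div_le_iff₀ (by linarith)]
  calc ∫ t in a..b, f t ≤ ∫ _t in a..b, f θ := by
        apply integral_mono_on hab.le (hf.intervalIntegrable _ _)
          (intervalIntegrable_const)
        intro x hx
        exact hmax hx
    _ = f θ * (b - a) := by simp [mul_comm]

lemma choose_c (w : ℂ) : ∃ c : Fin 4, max |w.re| |w.im| = (Complex.I ^ (c:ℕ) * w).re := by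
  have h1 : Complex.I ^ (1:ℕ) = Complex.I := pow_one _
  have h2 : Complex.I ^ (2:ℕ) = -1 := Complex.I_sq
  have h3 : Complex.I ^ (3:ℕ) = -Complex.I := by
    rw [pow_succ, h2]; ring
  rcases le_total |w.im| |w.re| with h | h
  · rcases le_total 0 w.re with hr | hr
    · refine ⟨0, ?_⟩
      rw [max_eq_left h, abs_of_nonneg hr]; simp
    · refine ⟨2, ?_⟩
      rw [max_eq_left h, abs_of_nonpos hr]
      show -w.re = (Complex.I ^ (2:ℕ) * w).re
      rw [h2]; simp
  · rcases le_total 0 w.im with hi | hi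
    · refine ⟨3, ?_⟩
      rw [max_eq_right h, abs_of_nonneg hi]
      show w.im = (Complex.I ^ (3:ℕ) * w).re
      rw [h3]; simp [Complex.mul_re]
    · refine ⟨1, ?_⟩
      rw [max_eq_right h, abs_of_nonpos hi]
      show -w.im = (Complex.I ^ (1:ℕ) * w).re
      rw [h1]; simp [Complex.mul_re]

theorem stmt_11 (m : ℕ) (P : Fin m → ℂ) :
    ∃ c : Fin m → Fin 4,
      2 * Real.sqrt 2 / Real.pi * ∑ x, ‖P x‖ ≤
        ‖∑ x, Complex.I ^ (c x : ℕ) * P x‖ := by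
  have hpi : (0:ℝ) < Real.pi := Real.pi_pos
  set F : ℝ → ℝ := fun θ => ∑ x, ‖P x‖ * gmax (Complex.arg (P x) - θ) with hF
  have hFcont : Continuous F := by
    apply continuous_finset_sum
    intro x _
    exact continuous_const.mul (gmax_cont.comp (continuous_const.sub continuous_id))
  -- integral of F
  have hFint : ∫ θ in (0:ℝ)..(2*Real.pi), F θ
      = 4 * Real.sqrt 2 * ∑ x, ‖P x‖ := by
    rw [hF, integral_finset_sum]
    · rw [Finset.mul_sum]
      apply Finset.sum_congr rfl
      intro x _
      rw [integral_const_mul]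
      have : ∫ θ in (0:ℝ)..(2*Real.pi), gmax (Complex.arg (P x) - θ)
          = 4 * Real.sqrt 2 := by
        have he : ∀ θ : ℝ, gmax (Complex.arg (P x) - θ) = gmax (θ - Complex.arg (P x)) := by
          intro θ; rw [← gmax_even]; ring_nf
        simp_rw [he]
        rw [integral_comp_sub_right (f := gmax)]
        have := gmax_periodic2pi.intervalIntegral_add_eq (0 - Complex.arg (P x)) 0
        rw [zero_add] at this
        rw [show 2 * Real.pi - Complex.arg (P x)
            = 0 - Complex.arg (P x) + 2 * Real.pi by ring, this, integral_gmax_full]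
      rw [this]; ring
    · intro x _
      exact (continuous_const.mul
        (gmax_cont.comp (continuous_const.sub continuous_id))).intervalIntegrable _ _
  -- pick a good θ
  obtain ⟨θ, hθ⟩ := exists_ge_avg hFcont (a := 0) (b := 2*Real.pi) (by linarith)
  rw [hFint] at hθ
  have havg : 2 * Real.sqrt 2 / Real.pi * ∑ x, ‖P x‖ ≤ F θ := by
    have : 4 * Real.sqrt 2 * (∑ x, ‖P x‖) / (2 * Real.pi - 0)
        = 2 * Real.sqrt 2 / Real.pi * ∑ x, ‖P x‖ := by
      field_simp; ring
    rwa [this] at hθ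
  -- choose c
  have key : ∀ x : Fin m, ∃ c : Fin 4,
      ‖P x‖ * gmax (Complex.arg (P x) - θ)
        = (Complex.I ^ (c:ℕ) * (Complex.exp (-(θ:ℂ) * Complex.I) * P x)).re := by
    intro x
    obtain ⟨c, hc⟩ := choose_c (Complex.exp (-(θ:ℂ) * Complex.I) * P x)
    refine ⟨c, ?_⟩
    rw [← hc]
    have hw : Complex.exp (-(θ:ℂ) * Complex.I) * P x
        = (‖P x‖ : ℂ) * Complex.exp ((Complex.arg (P x) - θ : ℝ) * Complex.I) := by
      conv_lhs => rw [← Complex.norm_mul_exp_arg_mul_I (P x)]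
      rw [show ((Complex.arg (P x) - θ : ℝ) : ℂ)
          = (Complex.arg (P x) : ℂ) - (θ : ℂ) by push_cast; ring]
      rw [mul_comm (Complex.exp _), mul_assoc, ← Complex.exp_add]
      congr 2
      ring
    rw [hw]
    have hre : ((‖P x‖ : ℂ) *
        Complex.exp ((Complex.arg (P x) - θ : ℝ) * Complex.I)).re
        = ‖P x‖ * Real.cos (Complex.arg (P x) - θ) := by
      rw [Complex.mul_re, Complex.ofReal_re, Complex.ofReal_im,
        Complex.exp_ofReal_mul_I_re, Complex.exp_ofReal_mul_I_im]
      ring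
    have him : ((‖P x‖ : ℂ) *
        Complex.exp ((Complex.arg (P x) - θ : ℝ) * Complex.I)).im
        = ‖P x‖ * Real.sin (Complex.arg (P x) - θ) := by
      rw [Complex.mul_im, Complex.ofReal_re, Complex.ofReal_im,
        Complex.exp_ofReal_mul_I_re, Complex.exp_ofReal_mul_I_im]
      ring
    rw [hre, him, abs_mul, abs_mul, abs_norm,
      ← mul_max_of_nonneg _ _ (norm_nonneg (P x))]
    rfl
  choose c hc using key
  refine ⟨c, ?_⟩
  have hFθ : F θ = (Complex.exp (-(θ:ℂ) * Complex.I) * ∑ x, Complex.I ^ (c x : ℕ) * P x).re := by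
    rw [hF]
    simp only [hc]
    rw [Finset.mul_sum, ← Complex.re_sum]
    congr 1
    apply Finset.sum_congr rfl
    intro x _
    ring
  have hle : F θ ≤ ‖∑ x, Complex.I ^ (c x : ℕ) * P x‖ := by
    rw [hFθ]
    calc (Complex.exp (-(θ:ℂ) * Complex.I) * ∑ x, Complex.I ^ (c x : ℕ) * P x).re
        ≤ ‖Complex.exp (-(θ:ℂ) * Complex.I) * ∑ x, Complex.I ^ (c x : ℕ) * P x‖ :=
          Complex.re_le_norm _
      _ = ‖∑ x, Complex.I ^ (c x : ℕ) * P x‖ := by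
          rw [norm_mul]
          have : ‖Complex.exp (-(θ:ℂ) * Complex.I)‖ = 1 := by
            rw [show -(θ:ℂ) * Complex.I = ((-θ : ℝ) : ℂ) * Complex.I by push_cast; ring]
            exact Complex.norm_exp_ofReal_mul_I _
          rw [this, one_mul]
  linarith
end

section
/- Let k ≥ 1 and Q ∈ F_2^{k×k} upper triangular, R ∈ F_2^{n×k} of rank k, t ∈ F_2^n, c ∈ F_2^k. The two matrices Q and the vector c are uniquely determined by the function x ↦ (−1)^{xᵀQx} i^{cᵀx} from F_2^k to {1, −1, i, −i}: if (Q₁, c₁) and (Q₂, c₂) induce the same phase function, then Q₁ = Q₂ and c₁ = c₂. -/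
open Matrix

lemma phase_inj (a₁ b₁ a₂ b₂ : ZMod 2)
    (h : (-1 : ℂ) ^ a₁.val * Complex.I ^ b₁.val =
        (-1 : ℂ) ^ a₂.val * Complex.I ^ b₂.val) : a₁ = a₂ ∧ b₁ = b₂ := by
  fin_cases a₁ <;> fin_cases b₁ <;> fin_cases a₂ <;> fin_cases b₂ <;>
    simp_all [ZMod.val_one, Complex.ext_iff] <;> norm_num [ZMod.val] at * <;> trivial

theorem stmt_18 (n k : ℕ) (hk : 1 ≤ k)
    (Q₁ Q₂ : Matrix (Fin k) (Fin k) (ZMod 2))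
    (hQ₁ : ∀ i j, j < i → Q₁ i j = 0) (hQ₂ : ∀ i j, j < i → Q₂ i j = 0)
    (c₁ c₂ : Fin k → ZMod 2)
    (R : Matrix (Fin n) (Fin k) (ZMod 2)) (hR : R.rank = k) (t : Fin n → ZMod 2)
    (hphase : ∀ x : Fin k → ZMod 2,
      (-1 : ℂ) ^ (x ⬝ᵥ Q₁.mulVec x).val * Complex.I ^ (c₁ ⬝ᵥ x).val =
        (-1 : ℂ) ^ (x ⬝ᵥ Q₂.mulVec x).val * Complex.I ^ (c₂ ⬝ᵥ x).val) :
    Q₁ = Q₂ ∧ c₁ = c₂ := by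
  have key : ∀ x, x ⬝ᵥ Q₁.mulVec x = x ⬝ᵥ Q₂.mulVec x ∧ c₁ ⬝ᵥ x = c₂ ⬝ᵥ x :=
    fun x => phase_inj _ _ _ _ (hphase x)
  have hdiag : ∀ j, Q₁ j j = Q₂ j j := by
    intro j
    have := (key (Pi.single j 1)).1
    simpa [mulVec_single, dotProduct_single] using this
  constructor
  · ext j l
    rcases lt_trichotomy j l with h | h | h
    · have := (key (Pi.single j 1 + Pi.single l 1)).1
      simp [mulVec_add, dotProduct_add, add_dotProduct, mulVec_single,
        dotProduct_single, single_dotProduct, hQ₁ l j h, hQ₂ l j h,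
        hdiag j, hdiag l] at this
      exact this
    · subst h; exact hdiag j
    · rw [hQ₁ j l h, hQ₂ j l h]
  · ext j
    have := (key (Pi.single j 1)).2
    simpa [dotProduct_single] using this
end
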